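/- For any inconsistent finite knowledge base K, there exist μ_D(K) pairwise distinct minimal unsatisfiable subsets M₁, …, M_{μ_D(K)} of K such that {M₁, …, M_{μ_D(K)}} is itself a maximal partial MUS-decomposition of K. In other words, the maximum cardinality of a partial MUS-decomposition is attained by a partial MUS-decomposition all of whose components are single MUSes. -/
import Mathlib


inductive PropForm (V : Type) : Type
  | var : V → PropForm V
  | neg : PropForm V → PropForm V
  | conj : PropForm V → PropForm V → PropForm V
  | disj : PropForm V → PropForm V → PropForm V
  deriving DecidableEq

namespace PropForm
def eval {V : Type} (v : V → Bool) : PropForm V → Bool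
  | var p => v p
  | neg f => !(eval v f)
  | conj f g => eval v f && eval v g
  | disj f g => eval v f || eval v g
end PropForm

/-- A finite knowledge base `K` is satisfiable (consistent) if some valuation makes
all its formulas true. -/
def Sat {V : Type} (K : Finset (PropForm V)) : Prop :=
  ∃ v : V → Bool, ∀ f ∈ K, f.eval v = true

/-- `M` is a minimal unsatisfiable set: inconsistent, with every proper subset consistent. -/
def IsMUS {V : Type} (M : Finset (PropForm V)) : Prop :=
  ¬ Sat M ∧ ∀ M' ⊂ M, Sat M'

/-- The set of minimal unsatisfiable subsets of `K`. -/
def MUSes {V : Type} (K : Finset (PropForm V)) : Set (Finset (PropForm V)) :=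
  {M | M ⊆ K ∧ IsMUS M}

/-- A partial MUS-decomposition of `K`: a family of pairwise-disjoint inconsistent
subsets of `K` such that the MUSes of their union are exactly the disjoint union of
the MUSes of the components. -/
def IsPartialMUSdecomp {V : Type} [DecidableEq V] (K : Finset (PropForm V))
    (T : Finset (Finset (PropForm V))) : Prop :=
  (∀ Ki ∈ T, Ki ⊆ K ∧ ¬ Sat Ki) ∧
  (↑T : Set (Finset (PropForm V))).PairwiseDisjoint id ∧
  MUSes (T.sup id) = ⋃ Ki ∈ T, MUSes Ki ∧
  (↑T : Set (Finset (PropForm V))).Pairwise fun A B => Disjoint (MUSes A) (MUSes B)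

/-- The distribution index: maximal cardinality of a partial MUS-decomposition. -/
noncomputable def muD {V : Type} [DecidableEq V] (K : Finset (PropForm V)) : ℕ :=
  sSup {n : ℕ | ∃ T : Finset (Finset (PropForm V)), IsPartialMUSdecomp K T ∧ T.card = n}

lemma sat_empty {V : Type} : Sat (∅ : Finset (PropForm V)) :=
  ⟨fun _ => true, by simp⟩

lemma exists_mus {V : Type} : ∀ (S : Finset (PropForm V)), ¬ Sat S → ∃ M, M ⊆ S ∧ IsMUS M := by
  intro S
  induction S using Finset.strongInduction with
  | _ S ih =>
    intro hS
    by_cases hall : ∀ M' ⊂ S, Sat M'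
    · exact ⟨S, subset_rfl, hS, hall⟩
    · push_neg at hall
      obtain ⟨S', hsub, hS'⟩ := hall
      obtain ⟨M, hM, hmus⟩ := ih S' hsub hS'
      exact ⟨M, hM.trans hsub.subset, hmus⟩

open Classical in
noncomputable def musOf {V : Type} (S : Finset (PropForm V)) : Finset (PropForm V) :=
  if h : ¬ Sat S then (exists_mus S h).choose else ∅

lemma musOf_spec {V : Type} {S : Finset (PropForm V)} (h : ¬ Sat S) :
    musOf S ⊆ S ∧ IsMUS (musOf S) := by
  rw [musOf, dif_pos h]
; exact (exists_mus S h).choose_spec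

lemma musOf_nonempty {V : Type} {S : Finset (PropForm V)} (h : ¬ Sat S) :
    (musOf S).Nonempty := by
  rcases Finset.eq_empty_or_nonempty (musOf S) with he | hne
  · exact absurd (he ▸ sat_empty) (musOf_spec h).2.1
  · exact hne

lemma muses_of_isMUS {V : Type} {M : Finset (PropForm V)} (h : IsMUS M) :
    MUSes M = {M} := by
  ext N
  constructor
  · rintro ⟨hsub, hN⟩
    rcases eq_or_lt_of_le hsub with heq | hlt
    · exact heq
    · exact absurd (h.2 N hlt) hN.1
  · rintro rfl
    exact ⟨subset_rfl, h⟩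

theorem stmt10 {V : Type} [DecidableEq V] (K : Finset (PropForm V)) (h : ¬ Sat K) :
    ∃ T : Finset (Finset (PropForm V)),
      IsPartialMUSdecomp K T ∧ T.card = muD K ∧ ∀ M ∈ T, M ∈ MUSes K := by
  classical
  set A : Set ℕ := {n : ℕ | ∃ T : Finset (Finset (PropForm V)),
      IsPartialMUSdecomp K T ∧ T.card = n} with hA
  have hempty : IsPartialMUSdecomp K (∅ : Finset (Finset (PropForm V))) := by
    refine ⟨by simp, by simp, ?_, by simp⟩
    simp only [Finset.sup_empty, Finset.mem_coe]
    ext M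
    simp only [MUSes, Set.mem_setOf_eq, Finset.notMem_empty, Set.mem_iUnion]
    constructor
    · rintro ⟨hsub, hM⟩
      rw [Finset.bot_eq_empty, Finset.subset_empty] at hsub
      exact absurd (hsub ▸ sat_empty) hM.1
    · rintro ⟨_, ⟨h1, _⟩⟩
      simp at h1
  have hne : A.Nonempty := ⟨0, ∅, hempty, rfl⟩
  have hbdd : BddAbove A := by
    refine ⟨K.powerset.card, ?_⟩
    rintro n ⟨T, hT, rfl⟩
    refine Finset.card_le_card ?_
    intro B hB
    exact Finset.mem_powerset.mpr (hT.1 B hB).1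
  have hmem : muD K ∈ A := Nat.sSup_mem hne hbdd
  obtain ⟨T, hT, hcard⟩ := hmem
  obtain ⟨hT1, hT2, hT3, hT4⟩ := hT
  -- injectivity of musOf on T
  have hinj : Set.InjOn musOf (↑T : Set (Finset (PropForm V))) := by
    intro B hB C hC heq
    by_contra hne'
    have hd : Disjoint B C := hT2 hB hC hne'
    have h1 : musOf B ⊆ B := (musOf_spec (hT1 B hB).2).1
    have h2 : musOf B ⊆ C := heq ▸ (musOf_spec (hT1 C hC).2).1
    obtain ⟨x, hx⟩ := musOf_nonempty (hT1 B hB).2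
    exact (Finset.disjoint_left.mp hd (h1 hx)) (h2 hx)
  set T' : Finset (Finset (PropForm V)) := T.image musOf with hT'def
  have hmemT' : ∀ M ∈ T', ∃ B ∈ T, musOf B = M := by
    intro M hM
    simpa using Finset.mem_image.mp hM
  have hsub' : ∀ M ∈ T', M ∈ MUSes K := by
    intro M hM
    obtain ⟨B, hB, rfl⟩ := hmemT' M hM
    exact ⟨((musOf_spec (hT1 B hB).2).1).trans (hT1 B hB).1, (musOf_spec (hT1 B hB).2).2⟩
  have hd' : (↑T' : Set (Finset (PropForm V))).PairwiseDisjoint id := by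
    intro M1 hM1 M2 hM2 hne'
    obtain ⟨B, hB, rfl⟩ := hmemT' M1 hM1
    obtain ⟨C, hC, rfl⟩ := hmemT' M2 hM2
    have : B ≠ C := fun e => hne' (by rw [e])
    exact Finset.disjoint_left.mpr fun x hx1 hx2 =>
      Finset.disjoint_left.mp (hT2 hB hC this)
        ((musOf_spec (hT1 B hB).2).1 hx1) ((musOf_spec (hT1 C hC).2).1 hx2)
  refine ⟨T', ⟨?_, hd', ?_, ?_⟩, ?_, hsub'⟩
  · intro M hM
    exact ⟨(hsub' M hM).1, (hsub' M hM).2.1⟩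
  · -- MUSes (T'.sup id) = ⋃ M ∈ T', MUSes M
    ext N
    simp only [Set.mem_iUnion, exists_prop]
    constructor
    · rintro ⟨hNsub, hN⟩
      -- N ⊆ T.sup id
      have hNsub2 : N ⊆ T.sup id := by
        intro x hx
        obtain ⟨M, hM, hxM⟩ := Finset.mem_sup.mp (hNsub hx)
        obtain ⟨B, hB, rfl⟩ := hmemT' M hM
        exact Finset.mem_sup.mpr ⟨B, hB, (musOf_spec (hT1 B hB).2).1 hxM⟩
      have : N ∈ ⋃ Ki ∈ T, MUSes Ki := hT3 ▸ ⟨hNsub2, hN⟩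
      simp only [Set.mem_iUnion, exists_prop] at this
      obtain ⟨B, hB, hNB, _⟩ := this
      have hNmus : N ⊆ musOf B := by
        intro x hx
        obtain ⟨M, hM, hxM⟩ := Finset.mem_sup.mp (hNsub hx)
        obtain ⟨C, hC, rfl⟩ := hmemT' M hM
        by_cases hBC : B = C
        · exact hBC ▸ hxM
        · exact absurd ((musOf_spec (hT1 C hC).2).1 hxM)
            (Finset.disjoint_left.mp (hT2 hB hC hBC) (hNB hx))
      have hNeq : N = musOf B := by
        rcases eq_or_lt_of_le hNmus with heq | hlt
        · exact heq
        · exact absurd ((musOf_spec (hT1 B hB).2).2.2 N hlt) hN.1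
      refine ⟨musOf B, Finset.mem_image.mpr ⟨B, hB, rfl⟩, ?_⟩
      rw [muses_of_isMUS (musOf_spec (hT1 B hB).2).2]
      exact hNeq
    · rintro ⟨M, hM, hN⟩
      rw [muses_of_isMUS (hsub' M hM).2, Set.mem_singleton_iff] at hN
      exact hN ▸ ⟨Finset.le_sup (f := id) hM, (hsub' M hM).2⟩
  · intro M1 hM1 M2 hM2 hne'
    rw [muses_of_isMUS (hsub' M1 hM1).2, muses_of_isMUS (hsub' M2 hM2).2]
    simp [hne']
  · rw [Finset.card_image_of_injOn hinj, hcard]
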